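/- (Bounded-difference property of the variance estimator σ̂².) Let σ̂² be computed from samples (x₁,…,xₙ), (y₁,…,yₙ), and let (σ̂')² be computed from the samples obtained by replacing the single pair (x₁,y₁) by another pair (x₁',y₁') ∈ 𝒳 × 𝒳. Then |σ̂² − (σ̂')²| ≤ 36ν² (14/n − 11/n² + 3/n³) ≤ 504ν²/n. -/

import Mathlib

open MeasureTheory ProbabilityTheory Filter Finset

/-- `Hstar k (x,y) (x',y') = k(x,x') - k(x,y') - k(y,x')`. -/
noncomputable def Hstar {𝒳 : Type*} (k : 𝒳 → 𝒳 → ℝ) (u v : 𝒳 × 𝒳) : ℝ :=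
  k u.1 v.1 - k u.1 v.2 - k u.2 v.1

/-- The variance estimator
`σ̂² = (4/n³) ∑ᵢ (∑ⱼ H*ᵢⱼ)² − (4/n⁴) (∑ᵢ∑ⱼ H*ᵢⱼ)²` (sums include `i = j`). -/
noncomputable def sigmaHat {𝒳 : Type*} (k : 𝒳 → 𝒳 → ℝ) (n : ℕ) (u : Fin n → 𝒳 × 𝒳) : ℝ :=
  (4 / (n : ℝ) ^ 3) * ∑ i : Fin n, (∑ j : Fin n, Hstar k (u i) (u j)) ^ 2
    - (4 / (n : ℝ) ^ 4) * (∑ i : Fin n, ∑ j : Fin n, Hstar k (u i) (u j)) ^ 2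

set_option maxHeartbeats 1600000 in
/-- Bounded-difference property of the variance estimator `σ̂²`: replacing the
single sample pair `(x₁,y₁)` (index `0`) by another pair changes `σ̂²` by at
most `36ν²(14/n − 11/n² + 3/n³) ≤ 504ν²/n`. -/
theorem sigmaHat_bounded_difference {𝒳 : Type*} (k : 𝒳 → 𝒳 → ℝ) (ν : ℝ)
    (hsymm : ∀ x x', k x x' = k x' x)
    (hbound : ∀ x x', |k x x'| ≤ ν)
    (n : ℕ) (hn : 2 ≤ n)
    (u u' : Fin n → 𝒳 × 𝒳)
    (hu : ∀ i : Fin n, (i : ℕ) ≠ 0 → u' i = u i) :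
    |sigmaHat k n u - sigmaHat k n u'| ≤
        36 * ν ^ 2 * (14 / (n : ℝ) - 11 / (n : ℝ) ^ 2 + 3 / (n : ℝ) ^ 3) ∧
      36 * ν ^ 2 * (14 / (n : ℝ) - 11 / (n : ℝ) ^ 2 + 3 / (n : ℝ) ^ 3) ≤
        504 * ν ^ 2 / n := by
  haveI : NeZero n := ⟨by omega⟩
  set N : ℝ := (n : ℝ) with hNdef
  have hN2 : (2 : ℝ) ≤ N := by rw [hNdef]; exact_mod_cast hn
  have hN0 : (0 : ℝ) < N := by linarith
  have hNne : N ≠ 0 := ne_of_gt hN0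
  have hν : 0 ≤ ν := (abs_nonneg _).trans (hbound (u 0).1 (u 0).1)
  -- basic bound on Hstar
  have hHb : ∀ v w : 𝒳 × 𝒳, |Hstar k v w| ≤ 3 * ν := by
    intro v w
    have h1 := abs_le.mp (hbound v.1 w.1)
    have h2 := abs_le.mp (hbound v.1 w.2)
    have h3 := abs_le.mp (hbound v.2 w.1)
    simp only [Hstar]
    rw [abs_le]
    constructor <;> linarith [h1.1, h1.2, h2.1, h2.2, h3.1, h3.2]
  have habs_sub : ∀ a b : ℝ, |a - b| ≤ |a| + |b| := by
    intro a b
    rw [sub_eq_add_neg]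
    exact (abs_add_le _ _).trans (by rw [abs_neg])
  set S : Fin n → ℝ := fun i => ∑ j, Hstar k (u i) (u j) with hSdef
  set S' : Fin n → ℝ := fun i => ∑ j, Hstar k (u' i) (u' j) with hS'def
  -- generic sum bound
  have hsum : ∀ (f : Fin n → ℝ) (c : ℝ), (∀ j, |f j| ≤ c) → |∑ j, f j| ≤ N * c := by
    intro f c hc
    calc |∑ j, f j| ≤ ∑ j, |f j| := Finset.abs_sum_le_sum_abs _ _
      _ ≤ (univ : Finset (Fin n)).card • c :=
          Finset.sum_le_card_nsmul _ _ _ (fun j _ => hc j)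
      _ = N * c := by simp [nsmul_eq_mul, hNdef]
  have hSb : ∀ i, |S i| ≤ 3 * ν * N := by
    intro i
    have := hsum (fun j => Hstar k (u i) (u j)) (3 * ν) (fun j => hHb _ _)
    simpa [hSdef, mul_comm] using this
  have hS'b : ∀ i, |S' i| ≤ 3 * ν * N := by
    intro i
    have := hsum (fun j => Hstar k (u' i) (u' j)) (3 * ν) (fun j => hHb _ _)
    simpa [hS'def, mul_comm] using this
  -- difference of S at nonzero indices
  have hvz : ∀ j : Fin n, j ≠ 0 → (j : ℕ) ≠ 0 := by
    intro j hj h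
    exact hj (Fin.ext (by simp [h]))
  have hdiff : ∀ i : Fin n, i ≠ 0 →
      S i - S' i = Hstar k (u i) (u 0) - Hstar k (u i) (u' 0) := by
    intro i hi
    have hui : u' i = u i := hu i (hvz i hi)
    show (∑ j, Hstar k (u i) (u j)) - ∑ j, Hstar k (u' i) (u' j) = _
    rw [hui, ← Finset.sum_sub_distrib]
    exact Finset.sum_eq_single 0
      (fun j _ hj => by rw [hu j (hvz j hj), sub_self])
      (fun h => absurd (Finset.mem_univ _) h)
  have hdiffb : ∀ i : Fin n, i ≠ 0 → |S i - S' i| ≤ 6 * ν := by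
    intro i hi
    rw [hdiff i hi]
    have h1 := hHb (u i) (u 0)
    have h2 := hHb (u i) (u' 0)
    linarith [habs_sub (Hstar k (u i) (u 0)) (Hstar k (u i) (u' 0))]
  have hcard : (((univ : Finset (Fin n)).erase 0).card : ℝ) = N - 1 := by
    rw [Finset.card_erase_of_mem (mem_univ _), card_univ, Fintype.card_fin,
      Nat.cast_sub (by omega : 1 ≤ n)]
    simp [hNdef]
  -- bound on the A-part
  have hA : |(∑ i, (S i) ^ 2) - ∑ i, (S' i) ^ 2| ≤
      9 * ν ^ 2 * N ^ 2 + (N - 1) * (36 * ν ^ 2 * N) := by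
    rw [← Finset.sum_sub_distrib]
    have step1 : |∑ i, ((S i) ^ 2 - (S' i) ^ 2)| ≤ ∑ i, |(S i) ^ 2 - (S' i) ^ 2| :=
      Finset.abs_sum_le_sum_abs _ _
    have step2 : ∑ i, |(S i) ^ 2 - (S' i) ^ 2| =
        |(S 0) ^ 2 - (S' 0) ^ 2| + ∑ i ∈ univ.erase 0, |(S i) ^ 2 - (S' i) ^ 2| :=
      (Finset.add_sum_erase _ _ (mem_univ 0)).symm
    have part1 : |(S 0) ^ 2 - (S' 0) ^ 2| ≤ 9 * ν ^ 2 * N ^ 2 := by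
      have h1 := hSb 0
      have h2 := hS'b 0
      rw [abs_le]
      constructor <;>
        nlinarith [sq_abs (S 0), sq_abs (S' 0), abs_nonneg (S 0), abs_nonneg (S' 0)]
    have part2 : ∑ i ∈ univ.erase 0, |(S i) ^ 2 - (S' i) ^ 2| ≤
        (N - 1) * (36 * ν ^ 2 * N) := by
      have hterm : ∀ i ∈ univ.erase (0 : Fin n),
          |(S i) ^ 2 - (S' i) ^ 2| ≤ 36 * ν ^ 2 * N := by
        intro i hi
        have hi0 : i ≠ 0 := (Finset.mem_erase.mp hi).1
        have h1 := hdiffb i hi0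
        have h2 : |S i + S' i| ≤ 6 * ν * N := by
          have := (abs_add_le (S i) (S' i)).trans (add_le_add (hSb i) (hS'b i))
          linarith
        calc |(S i) ^ 2 - (S' i) ^ 2| = |S i - S' i| * |S i + S' i| := by
              rw [← abs_mul]; ring_nf
          _ ≤ (6 * ν) * (6 * ν * N) :=
              mul_le_mul h1 h2 (abs_nonneg _) (by nlinarith)
          _ = 36 * ν ^ 2 * N := by ring
      calc ∑ i ∈ univ.erase 0, |(S i) ^ 2 - (S' i) ^ 2|
          ≤ (univ.erase (0 : Fin n)).card • (36 * ν ^ 2 * N) :=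
            Finset.sum_le_card_nsmul _ _ _ hterm
        _ = (N - 1) * (36 * ν ^ 2 * N) := by rw [nsmul_eq_mul, hcard]
    calc |∑ i, ((S i) ^ 2 - (S' i) ^ 2)| ≤ ∑ i, |(S i) ^ 2 - (S' i) ^ 2| := step1
      _ = _ := step2
      _ ≤ 9 * ν ^ 2 * N ^ 2 + (N - 1) * (36 * ν ^ 2 * N) := add_le_add part1 part2
  -- bound on the B-part
  have hBsub : |(∑ i, S i) - ∑ i, S' i| ≤ 6 * ν * (2 * N - 1) := by
    rw [← Finset.sum_sub_distrib]
    have step1 : |∑ i, (S i - S' i)| ≤ ∑ i, |S i - S' i| :=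
      Finset.abs_sum_le_sum_abs _ _
    have step2 : ∑ i, |S i - S' i| =
        |S 0 - S' 0| + ∑ i ∈ univ.erase 0, |S i - S' i| :=
      (Finset.add_sum_erase _ _ (mem_univ 0)).symm
    have part1 : |S 0 - S' 0| ≤ 6 * ν * N := by
      have := (habs_sub (S 0) (S' 0)).trans (add_le_add (hSb 0) (hS'b 0))
      linarith
    have part2 : ∑ i ∈ univ.erase 0, |S i - S' i| ≤ (N - 1) * (6 * ν) := by
      calc ∑ i ∈ univ.erase 0, |S i - S' i|
          ≤ (univ.erase (0 : Fin n)).card • (6 * ν) :=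
            Finset.sum_le_card_nsmul _ _ _
              (fun i hi => hdiffb i (Finset.mem_erase.mp hi).1)
        _ = (N - 1) * (6 * ν) := by rw [nsmul_eq_mul, hcard]
    have := step1.trans (step2.le.trans (add_le_add part1 part2))
    nlinarith
  have hBb : |∑ i, S i| ≤ N * (3 * ν * N) := hsum S (3 * ν * N) hSb
  have hB'b : |∑ i, S' i| ≤ N * (3 * ν * N) := hsum S' (3 * ν * N) hS'b
  have hB2 : |(∑ i, S i) ^ 2 - (∑ i, S' i) ^ 2| ≤
      (6 * ν * (2 * N - 1)) * (6 * ν * N ^ 2) := by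
    have h2 : |(∑ i, S i) + ∑ i, S' i| ≤ 6 * ν * N ^ 2 := by
      have := (abs_add_le (∑ i, S i) (∑ i, S' i)).trans (add_le_add hBb hB'b)
      nlinarith
    calc |(∑ i, S i) ^ 2 - (∑ i, S' i) ^ 2|
        = |(∑ i, S i) - ∑ i, S' i| * |(∑ i, S i) + ∑ i, S' i| := by
          rw [← abs_mul]; ring_nf
      _ ≤ (6 * ν * (2 * N - 1)) * (6 * ν * N ^ 2) :=
          mul_le_mul hBsub h2 (abs_nonneg _) (by nlinarith)
  -- assemble
  have key : sigmaHat k n u - sigmaHat k n u' =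
      (4 / N ^ 3) * ((∑ i, (S i) ^ 2) - ∑ i, (S' i) ^ 2)
        - (4 / N ^ 4) * ((∑ i, S i) ^ 2 - (∑ i, S' i) ^ 2) := by
    simp only [sigmaHat, hSdef, hS'def, hNdef]
    ring
  have habs : |sigmaHat k n u - sigmaHat k n u'| ≤
      (4 / N ^ 3) * |(∑ i, (S i) ^ 2) - ∑ i, (S' i) ^ 2|
        + (4 / N ^ 4) * |(∑ i, S i) ^ 2 - (∑ i, S' i) ^ 2| := by
    rw [key]
    calc |(4 / N ^ 3) * ((∑ i, (S i) ^ 2) - ∑ i, (S' i) ^ 2)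
          - (4 / N ^ 4) * ((∑ i, S i) ^ 2 - (∑ i, S' i) ^ 2)|
        ≤ |(4 / N ^ 3) * ((∑ i, (S i) ^ 2) - ∑ i, (S' i) ^ 2)|
          + |(4 / N ^ 4) * ((∑ i, S i) ^ 2 - (∑ i, S' i) ^ 2)| := habs_sub _ _
      _ = _ := by
          rw [abs_mul, abs_mul, abs_of_nonneg (by positivity : (0:ℝ) ≤ 4 / N ^ 3),
            abs_of_nonneg (by positivity : (0:ℝ) ≤ 4 / N ^ 4)]
  have main : |sigmaHat k n u - sigmaHat k n u'| ≤
      36 * ν ^ 2 * (14 / N - 11 / N ^ 2 + 3 / N ^ 3) := by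
    have step : |sigmaHat k n u - sigmaHat k n u'| ≤
        (4 / N ^ 3) * (9 * ν ^ 2 * N ^ 2 + (N - 1) * (36 * ν ^ 2 * N))
          + (4 / N ^ 4) * ((6 * ν * (2 * N - 1)) * (6 * ν * N ^ 2)) := by
      refine habs.trans (add_le_add ?_ ?_)
      · exact mul_le_mul_of_nonneg_left hA (by positivity)
      · exact mul_le_mul_of_nonneg_left hB2 (by positivity)
    refine step.trans ?_
    have e1 : (4 / N ^ 3) * (9 * ν ^ 2 * N ^ 2 + (N - 1) * (36 * ν ^ 2 * N))
          + (4 / N ^ 4) * ((6 * ν * (2 * N - 1)) * (6 * ν * N ^ 2))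
        = (36 * ν ^ 2 * (13 * N ^ 3 - 8 * N ^ 2)) / N ^ 4 := by
      field_simp
      ring
    have e2 : 36 * ν ^ 2 * (14 / N - 11 / N ^ 2 + 3 / N ^ 3)
        = (36 * ν ^ 2 * (14 * N ^ 3 - 11 * N ^ 2 + 3 * N)) / N ^ 4 := by
      field_simp
    rw [e1, e2]
    have hcube : (0:ℝ) ≤ N ^ 3 - 3 * N ^ 2 + 3 * N := by
      nlinarith [sq_nonneg (N - 2), hN0, hN2]
    have hnum : 36 * ν ^ 2 * (13 * N ^ 3 - 8 * N ^ 2)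
        ≤ 36 * ν ^ 2 * (14 * N ^ 3 - 11 * N ^ 2 + 3 * N) := by
      nlinarith [mul_nonneg (sq_nonneg ν) hcube]
    exact (div_le_div_iff_of_pos_right (by positivity)).mpr hnum
  constructor
  · exact main
  · have e3 : 504 * ν ^ 2 / N - 36 * ν ^ 2 * (14 / N - 11 / N ^ 2 + 3 / N ^ 3)
        = 36 * ν ^ 2 * (11 * N - 3) / N ^ 3 := by
      field_simp
      ring
    have hpos : (0:ℝ) ≤ 36 * ν ^ 2 * (11 * N - 3) / N ^ 3 := by
      apply div_nonneg _ (by positivity)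
      nlinarith [sq_nonneg ν]
    linarith
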